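/- Let n, k ≥ 1 and m be natural numbers, R ≥ 0, B ≥ 0 and 0 ≤ γ < 1 real numbers, g* ∈ ℝⁿ, and let s, s' : ℕ → ℝⁿ be two sequences such that ‖s(i+1) − s(i)‖ ≤ R and ‖s'(i+1) − s'(i)‖ ≤ R for all i < m·k, and ‖s(j·k) − s'(j·k)‖ ≤ B for every j ≤ m. Then |Σ_{i=0}^{m·k} γ^i·(‖g* − s(i)‖ − ‖g* − s'(i)‖)| ≤ ((1 − γ^{m·k+1})/(1 − γ))·(k·R + B). -/

import Mathlib

private lemma tele_bound {E : Type*} [NormedAddCommGroup E]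
    (s : ℕ → E) (R : ℝ) (N a b : ℕ) (hab : a ≤ b) (hbN : b ≤ N)
    (h : ∀ i < N, ‖s (i + 1) - s i‖ ≤ R) :
    ‖s b - s a‖ ≤ (b - a : ℕ) * R := by
  induction b, hab using Nat.le_induction with
  | base => simp
  | succ b hab ih =>
    have hbN' : b ≤ N := Nat.le_of_succ_le hbN
    have := ih hbN'
    have hstep := h b (Nat.lt_of_succ_le hbN)
    calc ‖s (b + 1) - s a‖ ≤ ‖s (b + 1) - s b‖ + ‖s b - s a‖ := norm_sub_le_norm_sub_add_norm_sub _ _ _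
      _ ≤ R + (b - a : ℕ) * R := add_le_add hstep this
      _ = ((b + 1 - a : ℕ) : ℝ) * R := by
          have : (b + 1 - a) = (b - a) + 1 := by omega
          rw [this]; push_cast; ring

theorem suboptimality_bound_bounded_diameter
    (n k m : ℕ) (hk : 1 ≤ k) (R B γ : ℝ) (hR : 0 ≤ R) (hB : 0 ≤ B)
    (hγ0 : 0 ≤ γ) (hγ1 : γ < 1)
    (gstar : EuclideanSpace ℝ (Fin n))
    (s s' : ℕ → EuclideanSpace ℝ (Fin n))
    (hs : ∀ i < m * k, ‖s (i + 1) - s i‖ ≤ R)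
    (hs' : ∀ i < m * k, ‖s' (i + 1) - s' i‖ ≤ R)
    (hsync : ∀ j ≤ m, ‖s (j * k) - s' (j * k)‖ ≤ B) :
    |∑ i ∈ Finset.range (m * k + 1), γ ^ i * (‖gstar - s i‖ - ‖gstar - s' i‖)| ≤
      ((1 - γ ^ (m * k + 1)) / (1 - γ)) * (k * R + B) := by
  have hk0 : 0 < k := hk
  -- pointwise bound
  have key : ∀ i ≤ m * k, ‖s i - s' i‖ ≤ k * R + B := by
    intro i hi
    -- choose nearest multiple of k
    have hmain : ∀ (j d : ℕ), j ≤ m * k → k ∣ j → 2 * d ≤ k →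
        (j = i + d ∨ i = j + d) → ‖s i - s' i‖ ≤ k * R + B := by
      intro j d hj hdvd hd hcase
      obtain ⟨c, hc⟩ := hdvd
      have hjc : j = c * k := by rw [hc, Nat.mul_comm]
      have hcm : c ≤ m := by
        have : c * k ≤ m * k := by rw [← hjc]; exact hj
        exact Nat.le_of_mul_le_mul_right this hk0
      have hsync' := hsync c hcm
      have h1 : ‖s i - s j‖ ≤ (d : ℝ) * R := by
        rcases hcase with h | h
        · have := tele_bound s R (m * k) i j (by omega) hj hs
          rw [norm_sub_rev]
          have hd' : j - i = d := by omega
          rwa [hd'] at this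
        · have := tele_bound s R (m * k) j i (by omega) hi hs
          have hd' : i - j = d := by omega
          rwa [hd'] at this
      have h2 : ‖s' j - s' i‖ ≤ (d : ℝ) * R := by
        rcases hcase with h | h
        · have := tele_bound s' R (m * k) i j (by omega) hj hs'
          have hd' : j - i = d := by omega
          rwa [hd'] at this
        · have := tele_bound s' R (m * k) j i (by omega) hi hs'
          rw [norm_sub_rev]
          have hd' : i - j = d := by omega
          rwa [hd'] at this
      have hjj' : ‖s j - s' j‖ ≤ B := by rw [hjc]; exact hsync'
      calc ‖s i - s' i‖ ≤ ‖s i - s j‖ + ‖s j - s' i‖ := norm_sub_le_norm_sub_add_norm_sub _ _ _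
        _ ≤ ‖s i - s j‖ + (‖s j - s' j‖ + ‖s' j - s' i‖) :=
            add_le_add le_rfl (norm_sub_le_norm_sub_add_norm_sub _ _ _)
        _ ≤ (d : ℝ) * R + (B + (d : ℝ) * R) := add_le_add h1 (add_le_add hjj' h2)
        _ = 2 * d * R + B := by ring
        _ ≤ k * R + B := by
            have : (2 * d : ℝ) ≤ (k : ℝ) := by exact_mod_cast hd
            nlinarith
    set r := i % k with hr
    have hik : i = i / k * k + r := by
      rw [hr, Nat.mul_comm]; exact (Nat.div_add_mod i k).symm
    by_cases hcase : 2 * r ≤ k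
    · refine hmain (i / k * k) r ?_ ⟨i / k, Nat.mul_comm _ _⟩ hcase (Or.inr hik)
      have h1 : i / k ≤ m := by
        have h2 : i / k ≤ m * k / k := Nat.div_le_div_right hi
        rwa [Nat.mul_div_cancel m hk0] at h2
      exact Nat.mul_le_mul_right k h1
    · push_neg at hcase
      have hr1 : 1 ≤ r := by omega
      have hrk : r < k := Nat.mod_lt i hk0
      have hilt : i < m * k := by
        rcases Nat.lt_or_ge i (m * k) with h | h
        · exact h
        · exfalso
          have : i = m * k := by omega
          have : r = 0 := by
            rw [this] at hr
            simp [hr, Nat.mul_mod_left]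
          omega
      have hdiv : i / k < m := (Nat.div_lt_iff_lt_mul hk0).mpr hilt
      refine hmain ((i / k + 1) * k) (k - r) ?_ ⟨i / k + 1, Nat.mul_comm _ _⟩ (by omega) ?_
      · exact Nat.mul_le_mul_right k hdiv
      · left
        have hexp : (i / k + 1) * k = i / k * k + k := by ring
        omega
  -- pointwise bound on the reward difference
  have key2 : ∀ i ≤ m * k, |‖gstar - s i‖ - ‖gstar - s' i‖| ≤ k * R + B := by
    intro i hi
    have h1 : |‖gstar - s i‖ - ‖gstar - s' i‖| ≤ ‖(gstar - s i) - (gstar - s' i)‖ :=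
      abs_norm_sub_norm_le _ _
    have h2 : (gstar - s i) - (gstar - s' i) = s' i - s i := by abel
    rw [h2] at h1
    exact h1.trans ((norm_sub_rev (s' i) (s i)).le.trans (key i hi))
  have hγne : γ ≠ 1 := ne_of_lt hγ1
  have hgeom : ∑ i ∈ Finset.range (m * k + 1), γ ^ i = (1 - γ ^ (m * k + 1)) / (1 - γ) := by
    rw [geom_sum_eq hγne, ← neg_sub (1:ℝ) (γ ^ (m * k + 1)), ← neg_sub (1:ℝ) γ, neg_div_neg_eq]
  calc |∑ i ∈ Finset.range (m * k + 1), γ ^ i * (‖gstar - s i‖ - ‖gstar - s' i‖)|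
      ≤ ∑ i ∈ Finset.range (m * k + 1), |γ ^ i * (‖gstar - s i‖ - ‖gstar - s' i‖)| :=
        Finset.abs_sum_le_sum_abs _ _
    _ ≤ ∑ i ∈ Finset.range (m * k + 1), γ ^ i * (k * R + B) := by
        refine Finset.sum_le_sum fun i hi => ?_
        rw [abs_mul, abs_pow, abs_of_nonneg hγ0]
        refine mul_le_mul_of_nonneg_left ?_ (pow_nonneg hγ0 i)
        exact key2 i (by simpa using Nat.lt_succ_iff.mp (Finset.mem_range.mp hi))
    _ = ((1 - γ ^ (m * k + 1)) / (1 - γ)) * (k * R + B) := by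
        rw [← Finset.sum_mul, hgeom]
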